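/- arXiv:1609.08011 — 2 statements merged into one kernel-verified Lean document; each statement's English description precedes it below -/
import Mathlib

section
/- Nonexistence theorem: if θ₁ ∈ (0, π/4), λ < 0, and u is a C² function on [0, θ₁] solving u'' + 2(cos(2θ)/sin(2θ)) u' = λ(u^5 - u) on (0, θ₁) with u > 0 on (0, θ₁), u(0) = α ∈ (0,1), u'(0) = 0, and u(θ₁) = 0, then a contradiction follows; i.e., no such solution exists. -/
open Real

theorem stmt_9 (θ₁ lam α : ℝ) (hθ₁ : θ₁ ∈ Set.Ioo 0 (π/4)) (hlam : lam < 0)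
    (hα : α ∈ Set.Ioo (0:ℝ) 1) (u u' u'' : ℝ → ℝ)
    (hu : ∀ θ ∈ Set.Icc 0 θ₁, HasDerivAt u (u' θ) θ)
    (hu' : ∀ θ ∈ Set.Icc 0 θ₁, HasDerivAt u' (u'' θ) θ)
    (hu''c : ContinuousOn u'' (Set.Icc 0 θ₁))
    (hpos : ∀ θ ∈ Set.Ioo 0 θ₁, 0 < u θ)
    (hu0 : u 0 = α) (hu'0 : u' 0 = 0) (huθ₁ : u θ₁ = 0)
    (hODE : ∀ θ ∈ Set.Ioo 0 θ₁,
      u'' θ + 2 * (Real.cos (2*θ) / Real.sin (2*θ)) * u' θ = lam * (u θ^5 - u θ)) :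
    False := by
  set E : ℝ → ℝ := fun θ => (1/2) * (u' θ)^2 - lam * ((u θ)^6/6 - (u θ)^2/2) with hE
  have hEderiv : ∀ θ ∈ Set.Icc 0 θ₁,
      HasDerivAt E ((1/2) * (2 * u' θ ^ 1 * u'' θ)
        - lam * ((6 * u θ ^ 5 * u' θ)/6 - (2 * u θ ^ 1 * u' θ)/2)) θ := by
    intro θ hθ
    exact (((hu' θ hθ).pow 2).const_mul (1/2)).sub
      ((((hu θ hθ).pow 6).div_const 6).sub (((hu θ hθ).pow 2).div_const 2)
        |>.const_mul lam)
  have hEderiv' : ∀ θ ∈ Set.Ioo 0 θ₁,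
      HasDerivAt E (-(2 * (Real.cos (2*θ) / Real.sin (2*θ)) * (u' θ)^2)) θ := by
    intro θ hθ
    have h := hEderiv θ (Set.mem_Icc.2 ⟨hθ.1.le, hθ.2.le⟩)
    convert h using 1
    have hode := hODE θ hθ
    linear_combination (-(u' θ)) * hode
  have hEcont : ContinuousOn E (Set.Icc 0 θ₁) := by
    intro θ hθ
    exact (hEderiv θ hθ).continuousAt.continuousWithinAt
  have hanti : AntitoneOn E (Set.Icc 0 θ₁) := by
    apply antitoneOn_of_deriv_nonpos (convex_Icc 0 θ₁) hEcont
    · intro θ hθ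
      rw [interior_Icc] at hθ
      exact (hEderiv' θ hθ).differentiableAt.differentiableWithinAt
    · intro θ hθ
      rw [interior_Icc] at hθ
      rw [(hEderiv' θ hθ).deriv]
      have hsin : 0 < Real.sin (2*θ) := by
        apply Real.sin_pos_of_pos_of_lt_pi (by linarith [hθ.1])
        have := hθ₁.2
        have hpi : 0 < π := Real.pi_pos
        nlinarith [hθ.2]
      have hcos : 0 ≤ Real.cos (2*θ) := by
        apply Real.cos_nonneg_of_mem_Icc
        constructor
        · have := Real.pi_pos; nlinarith [hθ.1]
        · nlinarith [hθ.2, hθ₁.2]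
      have : 0 ≤ Real.cos (2*θ) / Real.sin (2*θ) := div_nonneg hcos hsin.le
      nlinarith [sq_nonneg (u' θ)]
  have h0mem : (0:ℝ) ∈ Set.Icc 0 θ₁ := ⟨le_refl 0, hθ₁.1.le⟩
  have h1mem : θ₁ ∈ Set.Icc 0 θ₁ := ⟨hθ₁.1.le, le_refl θ₁⟩
  have hle := hanti h0mem h1mem hθ₁.1.le
  have hE0 : E 0 = - lam * (α^6/6 - α^2/2) := by simp [hE, hu0, hu'0]
  have hE1 : E θ₁ = (1/2) * (u' θ₁)^2 := by simp [hE, huθ₁]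
  rw [hE0, hE1] at hle
  obtain ⟨hα0, hα1⟩ := hα
  have hα4 : α^4 < 1 := pow_lt_one₀ hα0.le hα1 (by norm_num)
  have hα2 : 0 < α^2 := pow_pos hα0 2
  have h6 : α^6 < α^2 := by nlinarith
  have hneg : α^6/6 - α^2/2 < 0 := by nlinarith
  have hl : (0:ℝ) < -lam := by linarith
  nlinarith [sq_nonneg (u' θ₁), mul_neg_of_pos_of_neg hl hneg]
end

section
/- Exponential smallness lemma: given δ, κ > 0 and K ∈ ℝ, with μ_ε = K² + κ/ε², A_ε = (1 - e^{2c₂δ})/(2(e^{c₁δ} - e^{(2c₂-c₁)δ})) and B_ε = (1 - e^{2c₁δ})/(2(e^{c₂δ} - e^{(2c₁-c₂)δ})) where c₁ = K + √μ_ε, c₂ = K - √μ_ε, there exist β > 0 and ε₁ > 0 such that A_ε + B_ε < e^{-β/ε} for all ε ∈ (0, ε₁). -/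
open Real

noncomputable def c1 (K κ ε : ℝ) : ℝ := K + Real.sqrt (K^2 + κ/ε^2)

noncomputable def c2 (K κ ε : ℝ) : ℝ := K - Real.sqrt (K^2 + κ/ε^2)

noncomputable def Acoef (K κ δ ε : ℝ) : ℝ :=
  (1 - Real.exp (2 * c2 K κ ε * δ)) /
    (2 * (Real.exp (c1 K κ ε * δ) - Real.exp ((2 * c2 K κ ε - c1 K κ ε) * δ)))

noncomputable def Bcoef (K κ δ ε : ℝ) : ℝ :=
  (1 - Real.exp (2 * c1 K κ ε * δ)) /
    (2 * (Real.exp (c2 K κ ε * δ) - Real.exp ((2 * c1 K κ ε - c2 K κ ε) * δ)))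

/-- Generic bound: if `2 exp v ≤ exp u` and `z ≤ exp w`, then
`z / (2 (exp u - exp v)) ≤ exp (w - u)`. -/
lemma frac_le (u v w z : ℝ) (h : 2 * Real.exp v ≤ Real.exp u) (hz : z ≤ Real.exp w) :
    z / (2 * (Real.exp u - Real.exp v)) ≤ Real.exp (w - u) := by
  have hXpos := Real.exp_pos u
  have hden : Real.exp u ≤ 2 * (Real.exp u - Real.exp v) := by linarith
  have hdpos : 0 < 2 * (Real.exp u - Real.exp v) := lt_of_lt_of_le hXpos hden
  calc z / (2 * (Real.exp u - Real.exp v))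
      ≤ Real.exp w / (2 * (Real.exp u - Real.exp v)) := by
        exact (div_le_div_iff_of_pos_right hdpos).mpr hz
    _ ≤ Real.exp w / Real.exp u := by
        apply div_le_div_of_nonneg_left (Real.exp_pos w).le hXpos hden
    _ = Real.exp (w - u) := (Real.exp_sub _ _).symm

theorem stmt_16 (δ κ K : ℝ) (hδ : 0 < δ) (hκ : 0 < κ) :
    ∃ β > 0, ∃ ε₁ > 0, ∀ ε : ℝ, 0 < ε → ε < ε₁ →
      Acoef K κ δ ε + Bcoef K κ δ ε < Real.exp (-β/ε) := by
  have hκ' : 0 < Real.sqrt κ := Real.sqrt_pos.mpr hκ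
  have hlog2 : 0 < Real.log 2 := Real.log_pos (by norm_num)
  have hL : 0 < Real.log 2 + |K| * δ + 1 := by positivity
  refine ⟨Real.sqrt κ * δ / 2, by positivity,
    min ((Real.sqrt κ * δ / 2) / (Real.log 2 + |K| * δ + 1)) (4 * δ * Real.sqrt κ),
    lt_min (by positivity) (by positivity), ?_⟩
  intro ε hε hε₁
  have hε₁' : ε < (Real.sqrt κ * δ / 2) / (Real.log 2 + |K| * δ + 1) :=
    lt_of_lt_of_le hε₁ (min_le_left _ _)
  have hε₂' : ε < 4 * δ * Real.sqrt κ := lt_of_lt_of_le hε₁ (min_le_right _ _)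
  set s := Real.sqrt (K ^ 2 + κ / ε ^ 2) with hsdef
  have hspos : 0 < s := Real.sqrt_pos.mpr (by positivity)
  have hsκ : Real.sqrt κ / ε ≤ s := by
    have h1 : Real.sqrt (κ / ε ^ 2) ≤ s := Real.sqrt_le_sqrt (by nlinarith [sq_nonneg K])
    have h2 : Real.sqrt (κ / ε ^ 2) = Real.sqrt κ / ε := by
      rw [Real.sqrt_div hκ.le, Real.sqrt_sq hε.le]
    linarith [h2 ▸ h1]
  have hsε : Real.sqrt κ ≤ s * ε := by
    rw [div_le_iff₀ hε] at hsκ; exact hsκ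
  -- 4 s δ ≥ 1, hence exp (4 s δ) ≥ 2
  have h4s : 1 ≤ 4 * s * δ := by nlinarith [hsε, hε₂', hε, hδ]
  have hexp4 : (2 : ℝ) ≤ Real.exp (4 * s * δ) := by
    have := Real.add_one_le_exp (4 * s * δ)
    linarith
  have hkey : ∀ u v : ℝ, u - v = 4 * s * δ → 2 * Real.exp v ≤ Real.exp u := by
    intro u v huv
    have he : Real.exp u = Real.exp v * Real.exp (4 * s * δ) := by
      rw [← Real.exp_add]; congr 1; linarith
    nlinarith [Real.exp_pos v]
  have hc1 : c1 K κ ε = K + s := by simp only [c1, hsdef]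
  have hc2 : c2 K κ ε = K - s := by simp only [c2, hsdef]
  -- Bound A
  have hAeq : Acoef K κ δ ε =
      (1 - Real.exp (2 * (K - s) * δ)) /
        (2 * (Real.exp ((K + s) * δ) - Real.exp ((2 * (K - s) - (K + s)) * δ))) := by
    simp only [Acoef, hc1, hc2]
  have hA : Acoef K κ δ ε ≤ Real.exp (0 - (K + s) * δ) := by
    rw [hAeq]
    apply frac_le _ _ 0 _ (hkey _ _ (by ring))
    rw [Real.exp_zero]
    linarith [Real.exp_pos (2 * (K - s) * δ)]
  -- Bound B
  have hBeq : Bcoef K κ δ ε =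
      (Real.exp (2 * (K + s) * δ) - 1) /
        (2 * (Real.exp ((2 * (K + s) - (K - s)) * δ) - Real.exp ((K - s) * δ))) := by
    simp only [Bcoef, hc1, hc2]
    rw [show Real.exp (2*(K+s)*δ) - 1 = -(1 - Real.exp (2*(K+s)*δ)) by ring,
      show 2 * (Real.exp ((2*(K+s)-(K-s))*δ) - Real.exp ((K-s)*δ))
        = -(2 * (Real.exp ((K-s)*δ) - Real.exp ((2*(K+s)-(K-s))*δ))) by ring,
      neg_div_neg_eq]
  have hB : Bcoef K κ δ ε ≤
      Real.exp (2 * (K + s) * δ - (2 * (K + s) - (K - s)) * δ) := by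
    rw [hBeq]
    apply frac_le _ _ _ _ (hkey _ _ (by ring))
    linarith
  -- Both bounds are at most exp ((|K| - s) δ)
  have habs : -|K| ≤ K ∧ K ≤ |K| := ⟨neg_abs_le K, le_abs_self K⟩
  have hA' : Real.exp (0 - (K + s) * δ) ≤ Real.exp ((|K| - s) * δ) := by
    apply Real.exp_le_exp.mpr
    nlinarith [mul_le_mul_of_nonneg_right habs.1 hδ.le]
  have hB' : Real.exp (2 * (K + s) * δ - (2 * (K + s) - (K - s)) * δ)
      ≤ Real.exp ((|K| - s) * δ) := by
    apply Real.exp_le_exp.mpr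
    nlinarith [mul_le_mul_of_nonneg_right habs.2 hδ.le]
  -- Final comparison
  have h2exp : (2 : ℝ) * Real.exp ((|K| - s) * δ) = Real.exp (Real.log 2 + (|K| - s) * δ) := by
    rw [Real.exp_add, Real.exp_log two_pos]
  have hεL : ε * (Real.log 2 + |K| * δ + 1) < Real.sqrt κ * δ / 2 :=
    (lt_div_iff₀ hL).mp hε₁'
  have hsδε : Real.sqrt κ * δ ≤ s * ε * δ := mul_le_mul_of_nonneg_right hsε hδ.le
  have hfin : (2 : ℝ) * Real.exp ((|K| - s) * δ) < Real.exp (-(Real.sqrt κ * δ / 2) / ε) := by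
    rw [h2exp]
    apply Real.exp_lt_exp.mpr
    rw [lt_div_iff₀ hε]
    nlinarith [hεL, hsδε, hε]
  linarith [hA.trans hA', hB.trans hB', hfin]
end
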